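/- Let X be a compact metric space. X is totally disconnected if and only if there exists an ultrametric D on X equivalent to the given metric d (i.e., inducing the same topology). -/

import Mathlib

open Filter Topology Metric Set

/-- A periodic structure: a sequence of positive integers with `m j ∣ m (j+1)` and `m j → ∞`. -/
structure PeriodicStructure where
  m : ℕ → ℕ
  pos : ∀ j, 0 < m j
  dvd : ∀ j, m j ∣ m (j + 1)
  tendsto : Filter.Tendsto m Filter.atTop Filter.atTop

/-- The odometer space `X_m` of a periodic structure. -/
def PeriodicStructure.space (p : PeriodicStructure) : Type :=
  {x : ℕ → ℕ // ∀ j, x j < p.m j ∧ x (j + 1) % p.m j = x j}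

instance (p : PeriodicStructure) : TopologicalSpace p.space :=
  inferInstanceAs (TopologicalSpace
    {x : ℕ → ℕ // ∀ j, x j < p.m j ∧ x (j + 1) % p.m j = x j})

/-- The odometer map `g_m` (adding 1 coordinatewise mod `m j`). -/
def PeriodicStructure.step (p : PeriodicStructure) (x : p.space) : p.space :=
  ⟨fun j => (x.1 j + 1) % p.m j, by
    intro j
    refine ⟨Nat.mod_lt _ (p.pos j), ?_⟩
    show (x.1 (j + 1) + 1) % p.m (j + 1) % p.m j = (x.1 j + 1) % p.m j
    rw [Nat.mod_mod_of_dvd _ (p.dvd j), ← (x.2 j).2, Nat.add_mod]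
    exact Nat.add_mod_mod _ _ _⟩

/-- `S` is an odometer for `f`: `f` restricted to `S` is topologically conjugate to
an odometer `g_m : X_m → X_m`. -/
def IsOdometer {X : Type*} [TopologicalSpace X] (f : X → X) (S : Set X) : Prop :=
  ∃ p : PeriodicStructure, ∃ h : p.space ≃ₜ S,
    ∀ z : p.space, f ((h z : X)) = ((h (p.step z) : X))

/-- `S` is a periodic orbit of `f`. -/
def IsPeriodicOrbit {X : Type*} (f : X → X) (S : Set X) : Prop :=
  ∃ x ∈ S, ∃ i : ℕ, 0 < i ∧ f^[i] x = x ∧ S = {y | ∃ j < i, f^[j] x = y}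

/-- The ω-limit set of a sequence of points. -/
def omegaLimitSeq {X : Type*} [TopologicalSpace X] (x : ℕ → X) : Set X :=
  {y | ∃ φ : ℕ → ℕ, StrictMono φ ∧
    Filter.Tendsto (fun j => x (φ j)) Filter.atTop (nhds y)}

/-- The ω-limit set `ω(x, f)` of a point. -/
def omegaLimitPt {X : Type*} [TopologicalSpace X] (f : X → X) (x : X) : Set X :=
  omegaLimitSeq fun i => f^[i] x

/-- `M` is a minimal set for `f`. -/
def IsMinimalSet {X : Type*} [TopologicalSpace X] (f : X → X) (M : Set X) : Prop :=
  M.Nonempty ∧ IsClosed M ∧ Set.MapsTo f M M ∧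
    ∀ S ⊆ M, IsClosed S → Set.MapsTo f S S → S = ∅ ∨ S = M

/-- `x` is a minimal point for `f`. -/
def IsMinimalPoint {X : Type*} [TopologicalSpace X] (f : X → X) (x : X) : Prop :=
  IsMinimalSet f (closure (Set.range fun i => f^[i] x))

/-- `x` is a regularly recurrent point for `f`. -/
def RegularlyRecurrent {X : Type*} [PseudoMetricSpace X] (f : X → X) (x : X) : Prop :=
  ∀ ε > 0, ∃ n : ℕ, 0 < n ∧ ∀ k : ℕ, dist x (f^[k * n] x) ≤ ε

/-- `f` has the shadowing property. -/
def ShadowingProperty {X : Type*} [PseudoMetricSpace X] (f : X → X) : Prop :=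
  ∀ ε > 0, ∃ δ > 0, ∀ ξ : ℕ → X,
    (∀ i, dist (f (ξ i)) (ξ (i + 1)) ≤ δ) → ∃ y, ∀ i, dist (f^[i] y) (ξ i) ≤ ε

theorem totallyDisconnected_iff_ultrametric {X : Type*} [MetricSpace X] [CompactSpace X] :
    TotallyDisconnectedSpace X ↔
      ∃ D : X → X → ℝ,
        (∀ x, D x x = 0) ∧
        (∀ x y, D x y = 0 → x = y) ∧
        (∀ x y, D x y = D y x) ∧
        (∀ x y z, D x z ≤ max (D x y) (D y z)) ∧
        (∀ s : Set X, IsOpen s ↔ ∀ x ∈ s, ∃ ε > (0 : ℝ), {y | D x y < ε} ⊆ s) := by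
  constructor
  · intro hTD
    -- choose clopen neighborhoods inside small balls
    have hV : ∀ (n : ℕ) (x : X), ∃ V : Set X,
        IsClopen V ∧ x ∈ V ∧ V ⊆ Metric.ball x ((1 / 2 : ℝ) ^ (n + 1)) := by
      intro n x
      have hb : Metric.ball x ((1 / 2 : ℝ) ^ (n + 1)) ∈ 𝓝 x :=
        Metric.ball_mem_nhds x (by positivity)
      rcases (nhds_basis_clopen x).mem_iff.mp hb with ⟨V, ⟨hxV, hVc⟩, hVb⟩
      exact ⟨V, hVc, hxV, hVb⟩
    choose V hVclopen hVmem hVsub using hV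
    have hcov : ∀ n : ℕ, ∃ T : Finset X, (univ : Set X) ⊆ ⋃ x ∈ T, V n x := by
      intro n
      apply isCompact_univ.elim_finite_subcover (V n) (fun x => (hVclopen n x).2)
      exact fun x _ => mem_iUnion.2 ⟨x, hVmem n x⟩
    choose T hT using hcov
    set A : Set (Set X) := insert ∅ (⋃ n : ℕ, V n '' (T n : Set X)) with hA
    have hAc : A.Countable :=
      (Set.countable_iUnion fun n => ((T n).finite_toSet.image _).countable).insert _
    obtain ⟨f, hf⟩ := hAc.exists_eq_range ⟨∅, mem_insert _ _⟩
    have hfclopen : ∀ k, IsClopen (f k) := by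
      intro k
      have : f k ∈ A := hf ▸ mem_range_self k
      rcases this with h | h
      · rw [h]; exact isClopen_empty
      · obtain ⟨n, hn⟩ := mem_iUnion.1 h
        obtain ⟨z, _, hz⟩ := hn
        rw [← hz]
        exact hVclopen n z
    have hsep : ∀ x y : X, x ≠ y → ∃ k, x ∈ f k ∧ y ∉ f k := by
      intro x y hxy
      have hd : (0 : ℝ) < dist x y := dist_pos.2 hxy
      obtain ⟨n, hn⟩ : ∃ n : ℕ, (1 / 2 : ℝ) ^ n < dist x y :=
        exists_pow_lt_of_lt_one hd one_half_lt_one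
      obtain ⟨z, hz⟩ := mem_iUnion.1 (hT n (mem_univ x))
      obtain ⟨hzT, hxz⟩ := mem_iUnion.1 hz
      have hVA : V n z ∈ A := mem_insert_of_mem _ (mem_iUnion.2 ⟨n, mem_image_of_mem _ hzT⟩)
      rw [hf] at hVA
      obtain ⟨k, hk⟩ := hVA
      refine ⟨k, by rw [hk]; exact hxz, ?_⟩
      rw [hk]
      intro hyz
      have h1 : dist x z < (1 / 2 : ℝ) ^ (n + 1) := mem_ball.1 (hVsub n z hxz)
      have h2 : dist y z < (1 / 2 : ℝ) ^ (n + 1) := mem_ball.1 (hVsub n z hyz)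
      have : dist x y < (1 / 2 : ℝ) ^ n := by
        calc dist x y ≤ dist x z + dist z y := dist_triangle x z y
        _ < (1 / 2 : ℝ) ^ (n + 1) + (1 / 2 : ℝ) ^ (n + 1) := by
            rw [dist_comm z y]; linarith
        _ = (1 / 2 : ℝ) ^ n := by ring
      linarith
    -- the embedding into ℕ → Bool
    set e : X → ℕ → Bool := fun x k => (f k).boolIndicator x with he
    have hecont : Continuous e := by
      apply continuous_pi
      intro k
      exact (continuous_boolIndicator_iff_isClopen _).2 (hfclopen k)
    have heinj : Function.Injective e := by
      intro x y hxy
      by_contra hne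
      obtain ⟨k, hxk, hyk⟩ := hsep x y hne
      have h1 : (f k).boolIndicator x = true := ((f k).mem_iff_boolIndicator x).1 hxk
      have h2 : (f k).boolIndicator y = false := ((f k).notMem_iff_boolIndicator y).1 hyk
      rw [show (f k).boolIndicator x = (f k).boolIndicator y from congrFun hxy k, h2] at h1
      exact Bool.false_ne_true h1
    letI : Dist (ℕ → Bool) := PiNat.dist
    have hind : Topology.IsInducing e := (hecont.isClosedEmbedding heinj).isInducing
    refine ⟨fun x y => dist (e x) (e y), fun x => PiNat.dist_self (e x),
      fun x y h => heinj (PiNat.eq_of_dist_eq_zero _ _ h),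
      fun x y => PiNat.dist_comm _ _,
      fun x y z => PiNat.dist_triangle_nonarch _ _ _, ?_⟩
    intro s
    rw [hind.isOpen_iff]
    constructor
    · rintro ⟨t, ht, rfl⟩ x hx
      obtain ⟨ε, hε, hball⟩ := (PiNat.isOpen_iff_dist t).1 ht (e x) hx
      exact ⟨ε, hε, fun y hy => hball _ hy⟩
    · intro hs
      choose! ε hε hball using hs
      refine ⟨⋃ x ∈ s, {z | dist (e x) z < ε x}, ?_, ?_⟩
      · refine isOpen_biUnion fun x hx => ?_
        rw [PiNat.isOpen_iff_dist]
        intro z hz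
        refine ⟨ε x, (hε x hx), fun w hw => ?_⟩
        calc dist (e x) w ≤ max (dist (e x) z) (dist z w) :=
              PiNat.dist_triangle_nonarch _ _ _
        _ < ε x := max_lt hz hw
      · ext y
        simp only [mem_preimage, mem_iUnion, mem_setOf_eq]
        constructor
        · rintro ⟨x, hx, hxy⟩
          exact hball x hx hxy
        · intro hy
          exact ⟨y, hy, by rw [PiNat.dist_self]; exact hε y hy⟩
  · rintro ⟨D, h0, heq, hsymm, hmax, hopen⟩
    have hnn : ∀ x y : X, 0 ≤ D x y := by
      intro x y
      have h := hmax x y x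
      rw [h0, hsymm y x, max_self] at h
      exact h
    refine ⟨?_⟩
    apply isTotallyDisconnected_of_isTotallySeparated ((totallySeparatedSpace_iff X).mp (totallySeparatedSpace_iff_exists_isClopen.mpr ?_))
    intro x y hxy
    have hpos : 0 < D x y := lt_of_le_of_ne (hnn x y) fun h => hxy (heq x y h.symm)
    refine ⟨{z | D x z < D x y}, ⟨?_, ?_⟩, by simpa using h0 x ▸ hpos, by simp⟩
    · rw [← isOpen_compl_iff, hopen]
      intro z hz
      simp only [mem_compl_iff, mem_setOf_eq, not_lt] at hz
      refine ⟨D x y, hpos, fun w hw => ?_⟩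
      simp only [mem_setOf_eq] at hw
      simp only [mem_compl_iff, mem_setOf_eq, not_lt]
      by_contra hcon
      push_neg at hcon
      have : D x z ≤ max (D x w) (D w z) := hmax x w z
      rw [hsymm w z] at this
      exact absurd (lt_of_le_of_lt this (max_lt hcon hw)) (not_lt.2 hz)
    · rw [hopen]
      intro z hz
      simp only [mem_setOf_eq] at hz
      refine ⟨D x y, hpos, fun w hw => ?_⟩
      simp only [mem_setOf_eq] at hw ⊢
      exact lt_of_le_of_lt (hmax x z w) (max_lt hz hw)
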